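/- Every ordered rooted tree T with rank R(T) = W has at least 2^{W−1} nodes. Consequently, every ordered rooted tree T with n nodes satisfies R(T) ≤ log₂ n + 1. -/

import Mathlib

/-- A finite (ordered) rooted tree: a root together with the list of subtrees
rooted at its children, listed from left to right. -/
inductive RTree : Type where
  | node : List RTree → RTree

namespace RTree

/-- The subtrees rooted at the children of the root, from left to right. -/
def children : RTree → List RTree
  | node cs => cs

/-- A rank-`W`-witness for a tree whose root has `rs.length ≥ 1` children,
where `rs` is the list of ranks of the children subtrees (left to right,
`0`-indexed).  It consists of a set `big` of big children (the others are
small), a coordinate `X` with `1 ≤ X ≤ W`, and the index `v` of the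
vertical child, which must be big, subject to (R1ℓ), (R1r), (R2ℓ), (R2r)
and (R3). -/
def IsRankWitness (rs : List ℕ) (W : ℕ) (big : Finset (Fin rs.length)) (X : ℕ)
    (v : Fin rs.length) : Prop :=
  1 ≤ X ∧ X ≤ W ∧ v ∈ big ∧
  -- (R1ℓ): at most X-1 big children are strictly left of c_v
  ((big.filter fun i => i < v).card < X) ∧
  -- (R1r): at most W-X big children are strictly right of c_v
  ((big.filter fun i => v < i).card + X ≤ W) ∧
  -- (R2ℓ): every small child left of c_v has rank ≤ X-1-ℓ_i
  (∀ i : Fin rs.length, i ∉ big → i < v →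
      rs.get i + (big.filter fun j => j < i).card + 1 ≤ X) ∧
  -- (R2r): every small child right of c_v has rank ≤ W-X-r_i
  (∀ i : Fin rs.length, i ∉ big → v < i →
      rs.get i + (big.filter fun j => i < j).card + X ≤ W) ∧
  -- (R3): injective rank-bounds π : big → {1,…,W} dominating the ranks
  (∃ π : Fin rs.length → ℕ,
      (∀ i ∈ big, rs.get i ≤ π i ∧ 1 ≤ π i ∧ π i ≤ W) ∧
      Set.InjOn π big)

/-- `T` (with child rank list `rs`) has some rank-`W`-witness. -/
def hasRankWitness (rs : List ℕ) (W : ℕ) : Prop :=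
  ∃ (big : Finset (Fin rs.length)) (X : ℕ) (v : Fin rs.length),
    IsRankWitness rs W big X v

/-- Rank of a tree, given the list of ranks of the children of the root:
`1` for a single node, else the smallest `W ≥ 1` admitting a rank-`W`-witness. -/
noncomputable def rankAux (rs : List ℕ) : ℕ :=
  if rs = [] then 1 else sInf {W | 1 ≤ W ∧ hasRankWitness rs W}

/-- The rank `R(T)` of an ordered rooted tree. -/
noncomputable def rank : RTree → ℕ
  | node cs => rankAux (cs.attach.map fun c => rank c.1)
decreasing_by have := List.sizeOf_lt_of_mem c.2; simp only [RTree.node.sizeOf_spec]; omega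

/-- A left-corner-`W`-witness, given the list `rs` of ranks of the children of
the root: a number `W'` with `1 ≤ W' ≤ W+1` and indices
`σ(W') < … < σ(W)` (1-based positions in `{1,…,d}`, so the rank of child
`σ w` is `rs.getD (σ w - 1) 0`) satisfying (C1) and (C2), where by
convention `σ(W'-1) = 0` and `σ(W+1) = d+1`. -/
def IsLeftCornerWitness (rs : List ℕ) (W W' : ℕ) (σ : ℕ → ℕ) : Prop :=
  1 ≤ W' ∧ W' ≤ W + 1 ∧
  (∀ w, W' ≤ w → w ≤ W → 1 ≤ σ w ∧ σ w ≤ rs.length) ∧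
  (∀ w, W' ≤ w → w + 1 ≤ W → σ w < σ (w + 1)) ∧
  -- (C1)
  (∀ w, W' ≤ w → w ≤ W → rs.getD (σ w - 1) 0 = w) ∧
  -- (C2): for `W'-1 ≤ w ≤ W`, children strictly between σ(w) and σ(w+1)
  -- have rank ≤ w-1
  (∀ w, W' ≤ w + 1 → w ≤ W → ∀ i,
      (if W' ≤ w then σ w else 0) < i →
      i < (if w + 1 ≤ W then σ (w + 1) else rs.length + 1) →
      rs.getD (i - 1) 0 + 1 ≤ w)

/-- A right-corner-`W`-witness: the mirror notion, with
`σ(W) < … < σ(W')` and the conventions `σ(W'-1) = d+1`, `σ(W+1) = 0`. -/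
def IsRightCornerWitness (rs : List ℕ) (W W' : ℕ) (σ : ℕ → ℕ) : Prop :=
  1 ≤ W' ∧ W' ≤ W + 1 ∧
  (∀ w, W' ≤ w → w ≤ W → 1 ≤ σ w ∧ σ w ≤ rs.length) ∧
  (∀ w, W' ≤ w → w + 1 ≤ W → σ (w + 1) < σ w) ∧
  -- (C1)
  (∀ w, W' ≤ w → w ≤ W → rs.getD (σ w - 1) 0 = w) ∧
  -- (C2)
  (∀ w, W' ≤ w + 1 → w ≤ W → ∀ i,
      (if w + 1 ≤ W then σ (w + 1) else 0) < i →
      i < (if W' ≤ w then σ w else rs.length + 1) →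
      rs.getD (i - 1) 0 + 1 ≤ w)

end RTree

namespace RTree

/-- Number of nodes of the tree. -/
def size : RTree → ℕ
  | node cs => 1 + (cs.attach.map fun c => size c.1).sum
decreasing_by have := List.sizeOf_lt_of_mem c.2; simp only [RTree.node.sizeOf_spec]; omega

lemma exists_pi {n : ℕ} (W : ℕ) (S : Finset (Fin n)) (r : Fin n → ℕ) (x : Fin n)
    (hx : x ∉ S)
    (hbig : ∀ i ∈ S, W ≤ r i + (S.filter (· < i)).card)
    (hsum : (∑ i ∈ insert x S, 2 ^ (r i - 1)) + 2 ≤ 2 ^ W) :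
    ∃ π : Fin n → ℕ,
      (∀ i ∈ insert x S, r i ≤ π i ∧ 1 ≤ π i ∧ π i ≤ W) ∧
      Set.InjOn π ↑(insert x S) := by
  induction W generalizing S with
  | zero =>
    exfalso
    have h1 : 2 ^ (r x - 1) ≤ ∑ i ∈ insert x S, 2 ^ (r i - 1) :=
      Finset.single_le_sum (f := fun i => 2 ^ (r i - 1)) (fun i _ => Nat.zero_le _)
        (Finset.mem_insert_self x S)
    have h2 : (1:ℕ) ≤ 2 ^ (r x - 1) := Nat.one_le_two_pow
    simp only [pow_zero] at hsum
    omega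
  | succ W ih =>
    rcases S.eq_empty_or_nonempty with hS | hS
    · subst hS
      refine ⟨fun _ => W + 1, ?_, ?_⟩
      · intro i hi
        simp only [Finset.mem_insert, Finset.notMem_empty, or_false] at hi
        subst hi
        have h1 : 2 ^ (r i - 1) + 2 ≤ 2 ^ (W + 1) := by simpa using hsum
        have h2 : r i - 1 < W + 1 := by
          by_contra hc
          push_neg at hc
          have := Nat.pow_le_pow_right (by norm_num : 1 ≤ 2) hc
          omega
        have h3 : r i ≤ W + 1 := by omega
        exact ⟨h3, Nat.succ_le_succ (Nat.zero_le W), le_rfl⟩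
      · intro i hi j hj _
        have hi' : i = x := by simpa using hi
        have hj' : j = x := by simpa using hj
        rw [hi', hj']
    · set m := S.min' hS with hm
      have hmS : m ∈ S := S.min'_mem hS
      have hfilter : S.filter (· < m) = ∅ := by
        ext j
        simp only [Finset.mem_filter, Finset.notMem_empty, iff_false, not_and]
        intro hjS hj
        exact absurd (S.min'_le j hjS) (not_le.mpr hj)
      have hm1 : W + 1 ≤ r m := by
        have := hbig m hmS
        rw [hfilter] at this
        simpa using this
      have hxm : x ≠ m := fun h => hx (h ▸ hmS)
      have hins : insert x S = insert m (insert x (S.erase m)) := by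
        ext k
        simp only [Finset.mem_insert, Finset.mem_erase]
        by_cases hk : k = m <;> simp [hk, hmS] <;> tauto
      have hmnot : m ∉ insert x (S.erase m) := by
        simp [Finset.mem_insert, hxm.symm, Finset.notMem_erase]
      have hsum1 : (∑ i ∈ insert x S, 2 ^ (r i - 1))
          = 2 ^ (r m - 1) + ∑ i ∈ insert x (S.erase m), 2 ^ (r i - 1) := by
        rw [hins, Finset.sum_insert hmnot]
      have hm2 : r m = W + 1 := by
        have h3 : 2 ^ (r m - 1) < 2 ^ (W + 1) := by omega
        have h4 : r m - 1 < W + 1 := by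
          by_contra hc
          push_neg at hc
          exact absurd (Nat.pow_le_pow_right (by norm_num : 1 ≤ 2) hc) (not_le.mpr h3)
        omega
      have hsum2 : (∑ i ∈ insert x (S.erase m), 2 ^ (r i - 1)) + 2 ≤ 2 ^ W := by
        have : 2 ^ (r m - 1) = 2 ^ W := by rw [hm2]; simp
        have hp : (2:ℕ) ^ (W + 1) = 2 ^ W + 2 ^ W := by ring
        omega
      have hbig' : ∀ i ∈ S.erase m, W ≤ r i + ((S.erase m).filter (· < i)).card := by
        intro i hi
        have hiS : i ∈ S := Finset.mem_of_mem_erase hi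
        have hine : i ≠ m := Finset.ne_of_mem_erase hi
        have him : m < i := lt_of_le_of_ne (S.min'_le i hiS) (Ne.symm hine)
        have hfi : S.filter (· < i) = insert m ((S.erase m).filter (· < i)) := by
          conv_lhs => rw [← Finset.insert_erase hmS]
          rw [Finset.filter_insert, if_pos him]
        have hcard : (S.filter (· < i)).card = ((S.erase m).filter (· < i)).card + 1 := by
          rw [hfi, Finset.card_insert_of_notMem]
          intro hc
          exact (Finset.notMem_erase m S) (Finset.mem_of_mem_filter _ hc)
        have := hbig i hiS
        omega
      obtain ⟨π', hπ'1, hπ'2⟩ := ih (S.erase m)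
        (fun h => hx (Finset.mem_of_mem_erase h)) hbig' hsum2
      refine ⟨fun i => if i = m then W + 1 else π' i, ?_, ?_⟩
      · intro i hi
        by_cases him : i = m
        · subst him
          simp [hm2]
        · simp only [if_neg him]
          have hi' : i ∈ insert x (S.erase m) := by
            rw [hins] at hi
            rcases Finset.mem_insert.mp hi with h | h
            · exact absurd h him
            · exact h
          obtain ⟨a, b, c⟩ := hπ'1 i hi'
          exact ⟨a, b, by omega⟩
      · intro i hi j hj hij
        simp only [Finset.coe_insert, Set.mem_insert_iff, Finset.mem_coe] at hi hj
        have hmem : ∀ k : Fin n, (k = x ∨ k ∈ S) → k ≠ m → k ∈ insert x (S.erase m) := by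
          intro k hk hkm
          rcases hk with h | h
          · rw [h]; exact Finset.mem_insert_self x _
          · exact Finset.mem_insert_of_mem (Finset.mem_erase.mpr ⟨hkm, h⟩)
        by_cases him : i = m <;> by_cases hjm : j = m
        · rw [him, hjm]
        · exfalso
          have hj' := hmem j hj hjm
          have := (hπ'1 j hj').2.2
          simp only [if_pos him, if_neg hjm] at hij
          omega
        · exfalso
          have hi' := hmem i hi him
          have := (hπ'1 i hi').2.2
          simp only [if_neg him, if_pos hjm] at hij
          omega
        · have hi' := hmem i hi him
          have hj' := hmem j hj hjm
          simp only [if_neg him, if_neg hjm] at hij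
          exact hπ'2 (Finset.mem_coe.mpr hi') (Finset.mem_coe.mpr hj') hij


def scanB (r : ℕ → ℕ) (b : ℕ) : ℕ → ℕ
  | 0 => 0
  | p + 1 => scanB r b p + (if b < r p + scanB r b p then 1 else 0)

lemma main_witness (rs : List ℕ) (W : ℕ) (hne : rs ≠ [])
    (hsum : (∑ i : Fin rs.length, 2 ^ (rs.get i - 1)) + 2 ≤ 2 ^ W) :
    hasRankWitness rs W := by
  have hd : 1 ≤ rs.length := List.length_pos_iff.mpr hne
  set r : ℕ → ℕ := fun q => rs.getD q 0 with hr
  have hget : ∀ i : Fin rs.length, rs.get i = r i := by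
    intro i
    rw [hr]
    exact (List.getD_eq_get (l := rs) (d := 0) i).symm
  have hW2 : 2 ≤ W := by
    have h1 : (1:ℕ) ≤ 2 ^ (rs.get ⟨0, hd⟩ - 1) := Nat.one_le_two_pow
    have h2 : 2 ^ (rs.get ⟨0, hd⟩ - 1) ≤ ∑ i : Fin rs.length, 2 ^ (rs.get i - 1) :=
      Finset.single_le_sum (f := fun i : Fin rs.length => 2 ^ (rs.get i - 1))
        (fun i _ => Nat.zero_le _) (Finset.mem_univ _)
    have h3 : 2 ^ W ≥ 3 := by omega
    by_contra hc
    push_neg at hc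
    interval_cases W <;> omega
  set Sb := Finset.univ.filter (fun i : Fin rs.length =>
      i.val < rs.length - 1 ∧ W - 1 < r i.val + scanB r (W - 1) i.val) with hSb
  have scan_card : ∀ p, p ≤ rs.length - 1 →
      (Sb.filter (fun j => j.val < p)).card = scanB r (W - 1) p := by
    intro p
    induction p with
    | zero => intro _; simp [scanB]
    | succ p ih =>
      intro hp
      have hp' : p ≤ rs.length - 1 := by omega
      have hpd : p < rs.length := by omega
      have key : Sb.filter (fun j => j.val < p + 1)
          = (Sb.filter (fun j => j.val < p)) ∪ (Sb.filter (fun j => j.val = p)) := by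
        ext j
        simp only [Finset.mem_filter, Finset.mem_union]
        by_cases hj : j ∈ Sb <;> simp [hj] <;> omega
      have hdisj : Disjoint (Sb.filter (fun j => j.val < p))
          (Sb.filter (fun j => j.val = p)) := by
        rw [Finset.disjoint_left]
        intro j hj1 hj2
        simp only [Finset.mem_filter] at hj1 hj2
        omega
      have hfp : Sb.filter (fun j => j.val = p)
          = if W - 1 < r p + scanB r (W - 1) p then {(⟨p, hpd⟩ : Fin rs.length)} else ∅ := by
        split_ifs with hcond
        · ext j
          simp only [Finset.mem_filter, Finset.mem_singleton, hSb, Finset.mem_univ, true_and]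
          constructor
          · rintro ⟨_, hjp⟩
            exact Fin.ext hjp
          · intro hj
            rw [hj]
            have hplt : p < rs.length - 1 := by omega
            exact ⟨⟨hplt, hcond⟩, rfl⟩
        · ext j
          simp only [Finset.mem_filter, Finset.notMem_empty, iff_false, not_and, hSb,
            Finset.mem_univ, true_and]
          rintro ⟨_, hc2⟩ hjp
          rw [hjp] at hc2
          omega
      rw [key, Finset.card_union_of_disjoint hdisj, ih hp', hfp]
      split_ifs with hcond <;> simp [scanB, hcond]
  set v : Fin rs.length := ⟨rs.length - 1, by omega⟩ with hv
  have hvval : (v : ℕ) = rs.length - 1 := rfl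
  have hvSb : v ∉ Sb := by
    intro h
    rw [hSb, Finset.mem_filter] at h
    exact lt_irrefl _ h.2.1
  have hbig : ∀ i ∈ Sb, W ≤ rs.get i + (Sb.filter (· < i)).card := by
    intro i hi
    simp only [hSb, Finset.mem_filter, Finset.mem_univ, true_and] at hi
    have hfe : Sb.filter (· < i) = Sb.filter (fun j => j.val < i.val) := by
      apply Finset.filter_congr
      intro j _
      exact Iff.rfl
    rw [hget, hfe, scan_card i.val (by omega)]
    omega
  have hsum' : (∑ i ∈ insert v Sb, 2 ^ (rs.get i - 1)) + 2 ≤ 2 ^ W := by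
    have h1 : (∑ i ∈ insert v Sb, 2 ^ (rs.get i - 1))
        ≤ ∑ i : Fin rs.length, 2 ^ (rs.get i - 1) :=
      Finset.sum_le_sum_of_subset (Finset.subset_univ _)
    omega
  obtain ⟨π, hπ1, hπ2⟩ := exists_pi W Sb (fun i => rs.get i) v hvSb hbig hsum'
  have hcard : (insert v Sb).card ≤ W := by
    have := Finset.card_le_card_of_injOn π
      (fun i hi => Finset.mem_Icc.mpr ⟨(hπ1 i hi).2.1, (hπ1 i hi).2.2⟩) hπ2
    simpa [Nat.card_Icc] using this
  refine ⟨insert v Sb, W, v, ?_, le_rfl, Finset.mem_insert_self v Sb, ?_, ?_, ?_, ?_,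
    ⟨π, hπ1, hπ2⟩⟩
  · omega
  -- R1ℓ
  · have hsub : (insert v Sb).filter (fun i => i < v) = Sb := by
      ext j
      simp only [Finset.mem_filter, Finset.mem_insert]
      constructor
      · rintro ⟨h1 | h1, h2⟩
        · rw [h1] at h2
          exact absurd h2 (lt_irrefl v)
        · exact h1
      · intro hj
        have hj' : j.val < rs.length - 1 := by
          simp only [hSb, Finset.mem_filter] at hj
          exact hj.2.1
        exact ⟨Or.inr hj, by rw [Fin.lt_def, hvval]; exact hj'⟩
    rw [hsub]
    have := Finset.card_insert_of_notMem hvSb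
    omega
  -- R1r
  · have hsub : (insert v Sb).filter (fun i => v < i) = ∅ := by
      ext j
      simp only [Finset.mem_filter, Finset.notMem_empty, iff_false, not_and, Finset.mem_insert]
      rintro (rfl | hj)
      · exact lt_irrefl _
      · intro hc
        rw [Fin.lt_def, hvval] at hc
        simp only [hSb, Finset.mem_filter] at hj
        have := j.isLt
        omega
    rw [hsub]
    simp
  -- R2ℓ
  · intro i hi hiv
    have hiv' : i.val < rs.length - 1 := by
      rw [Fin.lt_def, hvval] at hiv
      exact hiv
    have hiSb : i ∉ Sb := fun h => hi (Finset.mem_insert_of_mem h)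
    have hcond : ¬ (W - 1 < r i.val + scanB r (W - 1) i.val) := by
      intro hc
      exact hiSb (by
        simp only [hSb, Finset.mem_filter, Finset.mem_univ, true_and]
        exact ⟨hiv', hc⟩)
    have hfe : (insert v Sb).filter (fun j => j < i)
        = Sb.filter (fun j => j.val < i.val) := by
      ext j
      simp only [Finset.mem_filter, Finset.mem_insert]
      constructor
      · rintro ⟨h1 | h1, h2⟩
        · rw [h1, Fin.lt_def] at h2
          rw [hvval] at h2
          exfalso
          omega
        · exact ⟨h1, by rw [← Fin.lt_def]; exact h2⟩
      · rintro ⟨h1, h2⟩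
        exact ⟨Or.inr h1, by rw [Fin.lt_def]; exact h2⟩
    rw [hfe, scan_card i.val (by omega), hget]
    omega
  -- R2r
  · intro i _ hvi
    rw [Fin.lt_def, hvval] at hvi
    have := i.isLt
    exfalso
    omega


lemma rank_node (cs : List RTree) :
    rank (node cs) = rankAux (cs.attach.map fun c => rank c.1) := by
  rw [rank]

lemma size_node (cs : List RTree) :
    size (node cs) = 1 + (cs.attach.map fun c => size c.1).sum := by
  rw [size]

lemma pow_rank_le_size (T : RTree) : 1 ≤ rank T ∧ 2 ^ (rank T - 1) ≤ size T := by
  have H : ∀ k (T : RTree), sizeOf T < k → 1 ≤ rank T ∧ 2 ^ (rank T - 1) ≤ size T := by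
    intro k
    induction k with
    | zero => intro T h; omega
    | succ k ih =>
      rintro ⟨cs⟩ hT
      have hcs : ∀ c ∈ cs, 1 ≤ rank c ∧ 2 ^ (rank c - 1) ≤ size c := by
        intro c hc
        apply ih
        have h1 := List.sizeOf_lt_of_mem hc
        simp only [RTree.node.sizeOf_spec] at hT
        omega
      rcases eq_or_ne cs [] with hnil | hnil
      · subst hnil
        rw [rank_node, size_node]
        simp [rankAux]
      · set rs := cs.attach.map (fun c => rank c.1) with hrs
        have hrsne : rs ≠ [] := by
          simp [hrs, hnil]
        set n := size (node cs) with hn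
        have hn1 : 1 ≤ n := by
          rw [hn, size_node]; omega
        set W := Nat.log 2 n + 1 with hW
        have hlow : 2 ^ (W - 1) ≤ n := by
          simpa [hW] using Nat.pow_log_le_self 2 (by omega : n ≠ 0)
        have hhigh : n < 2 ^ W := by
          simpa [hW] using Nat.lt_pow_succ_log_self (by norm_num : 1 < 2) n
        -- the sum of weights is at most n - 1
        have hsum : (∑ i : Fin rs.length, 2 ^ (rs.get i - 1)) + 2 ≤ 2 ^ W := by
          have e1 : (∑ i : Fin rs.length, 2 ^ (rs.get i - 1))
              = (rs.map (fun x => 2 ^ (x - 1))).sum := by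
            rw [← List.sum_ofFn]
            refine congrArg List.sum ?_
            have := List.ofFn_getElem_eq_map rs (fun x => 2 ^ (x - 1))
            simpa [List.get_eq_getElem] using this
          have e2 : rs.map (fun x => 2 ^ (x - 1))
              = cs.attach.map (fun c => 2 ^ (rank c.1 - 1)) := by
            rw [hrs, List.map_map]
            rfl
          have e3 : (cs.attach.map (fun c => 2 ^ (rank c.1 - 1))).sum
              ≤ (cs.attach.map (fun c => size c.1)).sum := by
            apply List.sum_le_sum
            intro c _
            exact (hcs c.1 c.2).2
          have e4 : n = 1 + (cs.attach.map (fun c => size c.1)).sum := by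
            rw [hn, size_node]
          rw [e1, e2]
          omega
        have hwit := main_witness rs W hrsne hsum
        have hmem : W ∈ {W' | 1 ≤ W' ∧ hasRankWitness rs W'} := ⟨by omega, hwit⟩
        have hrank : rank (node cs) = sInf {W' | 1 ≤ W' ∧ hasRankWitness rs W'} := by
          rw [rank_node, ← hrs, rankAux, if_neg hrsne]
        constructor
        · rw [hrank]
          exact (Nat.sInf_mem ⟨W, hmem⟩).1
        · have hle : rank (node cs) ≤ W := by
            rw [hrank]
            exact Nat.sInf_le hmem
          calc 2 ^ (rank (node cs) - 1) ≤ 2 ^ (W - 1) :=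
                Nat.pow_le_pow_right (by norm_num) (by omega)
            _ ≤ n := hlow
  exact H (sizeOf T + 1) T (by omega)


/-- Every ordered rooted tree of rank `W` has at least `2^{W-1}` nodes;
consequently every ordered rooted tree with `n` nodes has rank at most
`log₂ n + 1`. -/
theorem rank_le_log_size :
    (∀ (T : RTree) (W : ℕ), rank T = W → 2 ^ (W - 1) ≤ size T) ∧
    (∀ T : RTree, (rank T : ℝ) ≤ Real.logb 2 ((size T : ℝ)) + 1) := by
  constructor
  · intro T W h
    rw [← h]
    exact (pow_rank_le_size T).2
  · intro T
    obtain ⟨h1, h2⟩ := pow_rank_le_size T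
    have hr : ((2:ℝ)) ^ (rank T - 1 : ℕ) ≤ (size T : ℝ) := by exact_mod_cast h2
    have hlog : ((rank T - 1 : ℕ) : ℝ) ≤ Real.logb 2 (size T : ℝ) := by
      have hpos : (0:ℝ) < 2 ^ (rank T - 1 : ℕ) := by positivity
      have h3 := Real.logb_le_logb_of_le (by norm_num : (1:ℝ) < 2) hpos hr
      rwa [Real.logb_pow, Real.logb_self_eq_one (by norm_num), mul_one] at h3
    have hc : ((rank T - 1 : ℕ) : ℝ) = (rank T : ℝ) - 1 := by
      push_cast [Nat.cast_sub h1]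
      ring
    linarith

end RTree
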